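/- The limiting Gaussian process Z*_diff has covariance function ρ*_diff(u,v) = (u∧v)(1−(u∨v)) / √[(u∧v)(1−(u∧v))(u∨v)(1−(u∨v))] for 0 < u, v < 1. Equivalently, for 0 < u ≤ v < 1, the limit of Cov(Z_diff([nu]), Z_diff([nv])) as n → ∞ equals √[u(1−v)] / √[v(1−u)]. -/

import Mathlib

open Finset
open scoped Classical

noncomputable section

/-- Label of vertex `v` under permutation `π`: a value in `{1,...,n}`. -/
def lab {n : ℕ} (π : Equiv.Perm (Fin n)) (v : Fin n) : ℕ := (π v).val + 1

/-- Number of edges of `G` with both endpoint labels `≤ t`. -/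
def R1 {n : ℕ} (G : SimpleGraph (Fin n)) (t : ℕ) (π : Equiv.Perm (Fin n)) : ℕ :=
  (G.edgeFinset.filter (fun e => ∀ v ∈ e, lab π v ≤ t)).card

/-- Number of edges of `G` with both endpoint labels `> t`. -/
def R2 {n : ℕ} (G : SimpleGraph (Fin n)) (t : ℕ) (π : Equiv.Perm (Fin n)) : ℕ :=
  (G.edgeFinset.filter (fun e => ∀ v ∈ e, t < lab π v)).card

/-- Number of edges of `G` with one endpoint label `≤ t` and the other `> t`. -/
def R0 {n : ℕ} (G : SimpleGraph (Fin n)) (t : ℕ) (π : Equiv.Perm (Fin n)) : ℕ :=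
  (G.edgeFinset.filter (fun e => (∃ v ∈ e, lab π v ≤ t) ∧ (∃ v ∈ e, t < lab π v))).card

/-- Expectation under the permutation null distribution (uniform over all `n!` permutations). -/
def Ex {n : ℕ} (f : Equiv.Perm (Fin n) → ℝ) : ℝ :=
  (∑ π : Equiv.Perm (Fin n), f π) / (Nat.factorial n)

/-- Variance under the permutation null distribution. -/
def Var {n : ℕ} (f : Equiv.Perm (Fin n) → ℝ) : ℝ := Ex (fun π => (f π - Ex f) ^ 2)

/-- Covariance under the permutation null distribution. -/
def Cov {n : ℕ} (f g : Equiv.Perm (Fin n) → ℝ) : ℝ :=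
  Ex (fun π => (f π - Ex f) * (g π - Ex g))

/-- Difference of within-group edge counts `R_diff(t) = R₁(t) - R₂(t)`. -/
def Rdiff {n : ℕ} (G : SimpleGraph (Fin n)) (t : ℕ) (π : Equiv.Perm (Fin n)) : ℝ :=
  (R1 G t π : ℝ) - (R2 G t π : ℝ)


/-- Standardized difference-of-within-edge-counts statistic. -/
def Zdiff {n : ℕ} (G : SimpleGraph (Fin n)) (t : ℕ) (π : Equiv.Perm (Fin n)) : ℝ :=
  (Rdiff G t π - Ex (fun σ => Rdiff G t σ)) / Real.sqrt (Var (fun σ => Rdiff G t σ))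



lemma exists_perm_two {α : Type*} [DecidableEq α] {a b a' b' : α} (hab : a ≠ b) (hab' : a' ≠ b') :
    ∃ σ : Equiv.Perm α, σ a = a' ∧ σ b = b' := by
  refine ⟨Equiv.swap (Equiv.swap a a' b) b' * Equiv.swap a a', ?_, ?_⟩
  · have h1 : a' ≠ Equiv.swap a a' b := by
      intro h
      exact hab ((Equiv.swap a a').injective
        (show (Equiv.swap a a') a = (Equiv.swap a a') b by rw [Equiv.swap_apply_left]; exact h))
    simp only [Equiv.Perm.mul_apply, Equiv.swap_apply_left]
    exact Equiv.swap_apply_of_ne_of_ne h1 hab'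
  · simp only [Equiv.Perm.mul_apply, Equiv.swap_apply_left]

variable {α : Type*} [DecidableEq α] [Fintype α]

lemma fiber_one_const (v a b : α) :
    (univ.filter fun π : Equiv.Perm α => π v = a).card =
    (univ.filter fun π : Equiv.Perm α => π v = b).card := by
  apply Finset.card_bij' (fun π _ => Equiv.swap a b * π) (fun π _ => Equiv.swap a b * π)
  · intro π hπ
    simp only [mem_filter, mem_univ, true_and] at hπ ⊢
    simp [hπ]
  · intro π hπ
    simp only [mem_filter, mem_univ, true_and] at hπ ⊢
    simp [hπ, Equiv.swap_apply_right]
  · intro π _; simp [← mul_assoc]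
  · intro π _; simp [← mul_assoc]

lemma sum_perm_single (v : α) (f : α → ℝ) :
    ((Fintype.card α : ℝ)) * ∑ π : Equiv.Perm α, f (π v) = (Nat.factorial (Fintype.card α) : ℝ) * ∑ a, f a := by
  classical
  have key : ∑ π : Equiv.Perm α, f (π v)
      = ∑ a : α, ∑ π ∈ univ.filter (fun π : Equiv.Perm α => π v = a), f (π v) :=
    (Finset.sum_fiberwise_of_maps_to (fun π _ => mem_univ (π v)) _).symm
  have key2 : ∀ a : α, ∑ π ∈ univ.filter (fun π : Equiv.Perm α => π v = a), f (π v)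
      = ((univ.filter fun π : Equiv.Perm α => π v = a).card : ℝ) * f a := by
    intro a
    rw [Finset.sum_congr rfl (fun π hπ => by
      simp only [mem_filter] at hπ; rw [hπ.2]), Finset.sum_const, nsmul_eq_mul]
  have hfib : ∀ a : α, (Fintype.card α) * (univ.filter fun π : Equiv.Perm α => π v = a).card
      = Nat.factorial (Fintype.card α) := by
    intro a
    have : (univ : Finset (Equiv.Perm α)).card
        = ∑ b : α, (univ.filter fun π : Equiv.Perm α => π v = b).card :=
      Finset.card_eq_sum_card_fiberwise (fun π _ => mem_univ (π v))
    rw [Finset.card_univ, Fintype.card_perm] at this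
    have h2 : ∑ b : α, (univ.filter fun π : Equiv.Perm α => π v = b).card
        = ∑ _b : α, (univ.filter fun π : Equiv.Perm α => π v = a).card :=
      Finset.sum_congr rfl (fun b _ => fiber_one_const v b a)
    rw [this, h2, Finset.sum_const, smul_eq_mul, card_univ]
  have key3 : ∑ π : Equiv.Perm α, f (π v)
      = ∑ a : α, ((univ.filter fun π : Equiv.Perm α => π v = a).card : ℝ) * f a := by
    rw [key]; exact Finset.sum_congr rfl (fun a _ => key2 a)
  rw [key3, Finset.mul_sum, Finset.mul_sum]
  refine Finset.sum_congr rfl (fun a _ => ?_)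
  rw [← mul_assoc, ← Nat.cast_mul, hfib a]

lemma fiber_pair_const {v w : α} (hvw : v ≠ w) {p q : α × α} (hp : p.1 ≠ p.2) (hq : q.1 ≠ q.2) :
    (univ.filter fun π : Equiv.Perm α => (π v, π w) = p).card =
    (univ.filter fun π : Equiv.Perm α => (π v, π w) = q).card := by
  obtain ⟨σ, hσ1, hσ2⟩ := exists_perm_two hp hq
  apply Finset.card_bij' (fun π _ => σ * π) (fun π _ => σ⁻¹ * π)
  · intro π hπ
    simp only [mem_filter, mem_univ, true_and, Prod.mk.injEq] at hπ ⊢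
    obtain ⟨h1, h2⟩ := Prod.mk.injEq .. ▸ hπ
    simp only [Prod.ext_iff, Equiv.Perm.mul_apply]
    exact ⟨by rw [h1, hσ1], by rw [h2, hσ2]⟩
  · intro π hπ
    simp only [mem_filter, mem_univ, true_and, Prod.mk.injEq] at hπ ⊢
    obtain ⟨h1, h2⟩ := Prod.mk.injEq .. ▸ hπ
    simp only [Prod.ext_iff, Equiv.Perm.mul_apply]
    exact ⟨by rw [h1, ← hσ1, Equiv.Perm.inv_def, Equiv.symm_apply_apply],
      by rw [h2, ← hσ2, Equiv.Perm.inv_def, Equiv.symm_apply_apply]⟩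
  · intro π _; simp [← mul_assoc]
  · intro π _; simp [← mul_assoc]

lemma sum_perm_pair {v w : α} (hvw : v ≠ w) (g : α → α → ℝ) :
    ((univ : Finset α).offDiag.card : ℝ) * ∑ π : Equiv.Perm α, g (π v) (π w)
      = (Nat.factorial (Fintype.card α) : ℝ) * ∑ p ∈ (univ : Finset α).offDiag, g p.1 p.2 := by
  classical
  have hmaps : ∀ π : Equiv.Perm α, π ∈ (univ : Finset (Equiv.Perm α)) →
      (π v, π w) ∈ (univ : Finset α).offDiag := by
    intro π _
    simp only [Finset.mem_offDiag, mem_univ, true_and]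
    exact fun h => hvw (π.injective h)
  have key : ∑ π : Equiv.Perm α, g (π v) (π w)
      = ∑ p ∈ (univ : Finset α).offDiag,
          ∑ π ∈ univ.filter (fun π : Equiv.Perm α => (π v, π w) = p), g (π v) (π w) :=
    (Finset.sum_fiberwise_of_maps_to hmaps _).symm
  have key2 : ∀ p ∈ (univ : Finset α).offDiag,
      ∑ π ∈ univ.filter (fun π : Equiv.Perm α => (π v, π w) = p), g (π v) (π w)
      = ((univ.filter fun π : Equiv.Perm α => (π v, π w) = p).card : ℝ) * g p.1 p.2 := by
    intro p _
    rw [Finset.sum_congr rfl (fun π hπ => by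
      simp only [mem_filter, mem_univ, true_and] at hπ
      obtain ⟨h1, h2⟩ := Prod.mk.injEq .. ▸ hπ
      rw [h1, h2]), Finset.sum_const, nsmul_eq_mul]
  have hfib : ∀ p ∈ (univ : Finset α).offDiag,
      (univ : Finset α).offDiag.card * (univ.filter fun π : Equiv.Perm α => (π v, π w) = p).card
      = Nat.factorial (Fintype.card α) := by
    intro p hp
    simp only [Finset.mem_offDiag, mem_univ, true_and] at hp
    have hc : (univ : Finset (Equiv.Perm α)).card
        = ∑ q ∈ (univ : Finset α).offDiag,
            (univ.filter fun π : Equiv.Perm α => (π v, π w) = q).card :=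
      Finset.card_eq_sum_card_fiberwise hmaps
    rw [Finset.card_univ, Fintype.card_perm] at hc
    have h2 : ∑ q ∈ (univ : Finset α).offDiag,
        (univ.filter fun π : Equiv.Perm α => (π v, π w) = q).card
        = ∑ _q ∈ (univ : Finset α).offDiag,
            (univ.filter fun π : Equiv.Perm α => (π v, π w) = p).card :=
      Finset.sum_congr rfl (fun q hq => by
        simp only [Finset.mem_offDiag, mem_univ, true_and] at hq
        exact fiber_pair_const hvw hq hp)
    rw [hc, h2, Finset.sum_const, smul_eq_mul]
  have key3 : ∑ π : Equiv.Perm α, g (π v) (π w)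
      = ∑ p ∈ (univ : Finset α).offDiag,
          ((univ.filter fun π : Equiv.Perm α => (π v, π w) = p).card : ℝ) * g p.1 p.2 := by
    rw [key]; exact Finset.sum_congr rfl key2
  rw [key3, Finset.mul_sum, Finset.mul_sum]
  refine Finset.sum_congr rfl (fun p hp => ?_)
  rw [← mul_assoc, ← Nat.cast_mul, hfib p hp]

lemma Ex_single {n : ℕ} (hn : 0 < n) (v : Fin n) (f : Fin n → ℝ) :
    Ex (fun π => f (π v)) = (∑ a, f a) / n := by
  have h := sum_perm_single v f
  rw [Fintype.card_fin] at h
  have hn' : (n : ℝ) ≠ 0 := Nat.cast_ne_zero.mpr hn.ne'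
  have hf : (Nat.factorial n : ℝ) ≠ 0 := Nat.cast_ne_zero.mpr (Nat.factorial_ne_zero n)
  rw [Ex, div_eq_div_iff hf hn']
  linarith [h]

lemma Ex_pair {n : ℕ} (hn : 2 ≤ n) {v w : Fin n} (hvw : v ≠ w) (g : Fin n → Fin n → ℝ) :
    Ex (fun π => g (π v) (π w))
      = (∑ p ∈ (univ : Finset (Fin n)).offDiag, g p.1 p.2) / ((n : ℝ) * ((n : ℝ) - 1)) := by
  have h := sum_perm_pair hvw g
  rw [Fintype.card_fin] at h
  have hcard : (((univ : Finset (Fin n)).offDiag.card : ℝ)) = (n : ℝ) * ((n : ℝ) - 1) := by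
    rw [Finset.offDiag_card, Finset.card_univ, Fintype.card_fin]
    have h1 : n ≤ n * n := Nat.le_mul_of_pos_left n (by omega)
    rw [Nat.cast_sub h1]
    push_cast; ring
  have hne : (n : ℝ) * ((n : ℝ) - 1) ≠ 0 := by
    have : (2 : ℝ) ≤ (n : ℝ) := by exact_mod_cast hn
    nlinarith
  have hf : (Nat.factorial n : ℝ) ≠ 0 := Nat.cast_ne_zero.mpr (Nat.factorial_ne_zero n)
  rw [Ex, div_eq_div_iff hf hne]
  rw [hcard] at h
  linarith [h]

lemma edge_term {n : ℕ} (π : Equiv.Perm (Fin n)) (t : ℕ) (x y : Fin n) (hxy : x ≠ y) :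
    ((if (∀ v ∈ (s(x,y) : Sym2 (Fin n)), lab π v ≤ t) then (1:ℝ) else 0)
      - (if (∀ v ∈ (s(x,y) : Sym2 (Fin n)), t < lab π v) then (1:ℝ) else 0))
    = (∑ w : Fin n, if w ∈ (s(x,y) : Sym2 (Fin n)) ∧ lab π w ≤ t then (1:ℝ) else 0) - 1 := by
  have hsum : (∑ w : Fin n, if w ∈ (s(x,y) : Sym2 (Fin n)) ∧ lab π w ≤ t then (1:ℝ) else 0)
      = (if lab π x ≤ t then (1:ℝ) else 0) + (if lab π y ≤ t then (1:ℝ) else 0) := by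
    have step : ∀ w : Fin n, (if w ∈ (s(x,y) : Sym2 (Fin n)) ∧ lab π w ≤ t then (1:ℝ) else 0)
        = if w ∈ ({x, y} : Finset (Fin n)) then (if lab π w ≤ t then (1:ℝ) else 0) else 0 := by
      intro w
      by_cases hw : w ∈ ({x, y} : Finset (Fin n))
      · simp only [hw, if_true]
        have : w ∈ (s(x,y) : Sym2 (Fin n)) := by
          simp only [Finset.mem_insert, Finset.mem_singleton] at hw
          simp [Sym2.mem_iff, hw]
        simp [this]
      · have : ¬ w ∈ (s(x,y) : Sym2 (Fin n)) := by
          simp only [Finset.mem_insert, Finset.mem_singleton] at hw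
          push_neg at hw
          simp [Sym2.mem_iff, hw.1, hw.2]
        simp [this, hw]
    rw [Finset.sum_congr rfl (fun w _ => step w), Finset.sum_ite_mem, Finset.univ_inter,
      Finset.sum_pair hxy]
  rw [hsum]
  have hall : (∀ v ∈ (s(x,y) : Sym2 (Fin n)), lab π v ≤ t) ↔ (lab π x ≤ t ∧ lab π y ≤ t) := by
    constructor
    · intro h; exact ⟨h x (by simp), h y (by simp)⟩
    · rintro ⟨h1, h2⟩ v hv
      rcases Sym2.mem_iff.mp hv with rfl | rfl <;> assumption
  have hall2 : (∀ v ∈ (s(x,y) : Sym2 (Fin n)), t < lab π v)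
      ↔ (¬ lab π x ≤ t ∧ ¬ lab π y ≤ t) := by
    constructor
    · intro h; exact ⟨not_le.mpr (h x (by simp)), not_le.mpr (h y (by simp))⟩
    · rintro ⟨h1, h2⟩ v hv
      rcases Sym2.mem_iff.mp hv with rfl | rfl
      · exact not_le.mp h1
      · exact not_le.mp h2
  by_cases hx : lab π x ≤ t <;> by_cases hy : lab π y ≤ t <;>
    simp [hall, hall2, hx, hy]

lemma Rdiff_eq {n : ℕ} (G : SimpleGraph (Fin n)) (t : ℕ) (π : Equiv.Perm (Fin n)) :
    Rdiff G t π
      = (∑ w : Fin n, (G.degree w : ℝ) * (if lab π w ≤ t then (1:ℝ) else 0))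
        - (G.edgeFinset.card : ℝ) := by
  have h1 : (R1 G t π : ℝ) = ∑ e ∈ G.edgeFinset, (if (∀ v ∈ e, lab π v ≤ t) then (1:ℝ) else 0) := by
    rw [R1, Finset.card_filter]; push_cast; rfl
  have h2 : (R2 G t π : ℝ) = ∑ e ∈ G.edgeFinset, (if (∀ v ∈ e, t < lab π v) then (1:ℝ) else 0) := by
    rw [R2, Finset.card_filter]; push_cast; rfl
  rw [Rdiff, h1, h2, ← Finset.sum_sub_distrib]
  have key : ∀ e ∈ G.edgeFinset,
      ((if (∀ v ∈ e, lab π v ≤ t) then (1:ℝ) else 0) - (if (∀ v ∈ e, t < lab π v) then (1:ℝ) else 0))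
      = (∑ w : Fin n, if w ∈ e ∧ lab π w ≤ t then (1:ℝ) else 0) - 1 := by
    intro e he
    induction e with
    | _ x y =>
      exact edge_term π t x y (by
        intro h
        exact (G.not_isDiag_of_mem_edgeFinset he) (h ▸ Sym2.mk_isDiag_iff.mpr rfl))
  rw [Finset.sum_congr rfl key, Finset.sum_sub_distrib, Finset.sum_const, nsmul_eq_mul, mul_one]
  congr 1
  rw [Finset.sum_comm]
  refine Finset.sum_congr rfl (fun w _ => ?_)
  by_cases hw : lab π w ≤ t
  · simp only [hw, and_true, if_true]
    rw [mul_one]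
    have hc : (∑ e ∈ G.edgeFinset, if w ∈ e then (1:ℝ) else 0)
        = ((G.edgeFinset.filter (fun e => w ∈ e)).card : ℝ) := by
      rw [Finset.card_filter]; push_cast; rfl
    rw [hc, ← SimpleGraph.card_incidenceFinset_eq_degree, SimpleGraph.incidenceFinset_eq_filter]
  · simp [hw]

lemma Ex_sum' {n : ℕ} {ι : Type*} (s : Finset ι) (f : ι → Equiv.Perm (Fin n) → ℝ) :
    Ex (fun π => ∑ i ∈ s, f i π) = ∑ i ∈ s, Ex (f i) := by
  simp only [Ex, ← Finset.sum_div]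
  rw [Finset.sum_comm]

lemma Ex_sub' {n : ℕ} (f g : Equiv.Perm (Fin n) → ℝ) :
    Ex (fun π => f π - g π) = Ex f - Ex g := by
  simp only [Ex, ← sub_div, Finset.sum_sub_distrib]

lemma Ex_const' {n : ℕ} (c : ℝ) : Ex (fun _ : Equiv.Perm (Fin n) => c) = c := by
  simp only [Ex, Finset.sum_const, Finset.card_univ, Fintype.card_perm, Fintype.card_fin,
    nsmul_eq_mul]
  have : (Nat.factorial n : ℝ) ≠ 0 := Nat.cast_ne_zero.mpr (Nat.factorial_ne_zero n)
  field_simp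

lemma Ex_const_mul' {n : ℕ} (c : ℝ) (f : Equiv.Perm (Fin n) → ℝ) :
    Ex (fun π => c * f π) = c * Ex f := by
  simp only [Ex, ← Finset.mul_sum, mul_div_assoc]

lemma Ex_div_const' {n : ℕ} (c : ℝ) (f : Equiv.Perm (Fin n) → ℝ) :
    Ex (fun π => f π / c) = Ex f / c := by
  simp only [div_eq_inv_mul, Ex_const_mul']

lemma Ex_shift_div {n : ℕ} (f : Equiv.Perm (Fin n) → ℝ) (a c : ℝ) :
    Ex (fun π => (f π - c) / a) = (Ex f - c) / a := by
  have h1 : (fun π : Equiv.Perm (Fin n) => (f π - c) / a)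
      = fun π => a⁻¹ * (f π - c) := funext fun π => by rw [div_eq_mul_inv, mul_comm]
  rw [h1, Ex_const_mul']
  have h2 : Ex (fun π : Equiv.Perm (Fin n) => f π - c)
      = Ex f - c := by
    rw [show (fun π : Equiv.Perm (Fin n) => f π - c)
      = fun π => f π - (fun _ : Equiv.Perm (Fin n) => c) π from rfl, Ex_sub', Ex_const']
  rw [h2, div_eq_mul_inv, mul_comm]

lemma Cov_affine {n : ℕ} (f g : Equiv.Perm (Fin n) → ℝ) (a b c d : ℝ) :
    Cov (fun π => (f π - c) / a) (fun π => (g π - d) / b) = Cov f g / (a * b) := by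
  unfold Cov
  rw [show (fun π : Equiv.Perm (Fin n) =>
        ((f π - c) / a - Ex fun σ => (f σ - c) / a) * ((g π - d) / b - Ex fun σ => (g σ - d) / b))
      = fun π => ((f π - Ex f) * (g π - Ex g)) / (a * b) from funext fun π => by
    rw [Ex_shift_div, Ex_shift_div, div_sub_div_same, div_sub_div_same, div_mul_div_comm]
    congr 1 <;> ring]
  rw [Ex_div_const']

lemma Ex_add' {n : ℕ} (f g : Equiv.Perm (Fin n) → ℝ) :
    Ex (fun π => f π + g π) = Ex f + Ex g := by
  simp only [Ex, ← add_div, Finset.sum_add_distrib]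

lemma Cov_sub_const {n : ℕ} (f g : Equiv.Perm (Fin n) → ℝ) (c d : ℝ) :
    Cov (fun π => f π - c) (fun π => g π - d) = Cov f g := by
  have h := Cov_affine f g 1 1 c d
  simpa using h

lemma Cov_eq {n : ℕ} (f g : Equiv.Perm (Fin n) → ℝ) :
    Cov f g = Ex (fun π => f π * g π) - Ex f * Ex g := by
  unfold Cov
  rw [show (fun π : Equiv.Perm (Fin n) => (f π - Ex f) * (g π - Ex g))
      = fun π => (f π * g π) - (Ex g * f π + (Ex f * g π - Ex f * Ex g)) from
    funext fun π => by ring]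
  simp only [Ex_sub', Ex_add', Ex_const_mul', Ex_const']
  ring

lemma card_chi {n s : ℕ} (hs : s ≤ n) :
    (∑ a : Fin n, if (a : ℕ) + 1 ≤ s then (1:ℝ) else 0) = s := by
  rw [Fin.sum_univ_eq_sum_range (fun i => if i + 1 ≤ s then (1:ℝ) else 0) n]
  have h1 : (∑ i ∈ Finset.range n, if i + 1 ≤ s then (1:ℝ) else 0)
      = (((Finset.range n).filter (fun i => i + 1 ≤ s)).card : ℝ) := by
    rw [Finset.card_filter]; push_cast; rfl
  have h2 : (Finset.range n).filter (fun i => i + 1 ≤ s) = Finset.range s := by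
    ext i; simp only [Finset.mem_filter, Finset.mem_range]; omega
  rw [h1, h2, Finset.card_range]

lemma sum_chi_mul_chi {n s t : ℕ} (hst : s ≤ t) (hs : s ≤ n) :
    (∑ a : Fin n, (if (a : ℕ) + 1 ≤ s then (1:ℝ) else 0) * (if (a : ℕ) + 1 ≤ t then (1:ℝ) else 0))
      = s := by
  rw [show (fun a : Fin n => (if (a : ℕ) + 1 ≤ s then (1:ℝ) else 0) * (if (a : ℕ) + 1 ≤ t then (1:ℝ) else 0))
      = fun a : Fin n => if (a : ℕ) + 1 ≤ s then (1:ℝ) else 0 from funext fun a => by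
    by_cases h : (a : ℕ) + 1 ≤ s
    · simp [h, le_trans h hst]
    · simp [h]]
  exact card_chi hs

lemma sum_offDiag_chi {n s t : ℕ} (hst : s ≤ t) (ht : t ≤ n) :
    (∑ p ∈ (univ : Finset (Fin n)).offDiag,
        (if (p.1 : ℕ) + 1 ≤ s then (1:ℝ) else 0) * (if (p.2 : ℕ) + 1 ≤ t then (1:ℝ) else 0))
      = (s : ℝ) * t - s := by
  have hs : s ≤ n := le_trans hst ht
  set f : Fin n × Fin n → ℝ :=
    fun p => (if (p.1 : ℕ) + 1 ≤ s then (1:ℝ) else 0) * (if (p.2 : ℕ) + 1 ≤ t then (1:ℝ) else 0)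
    with hf
  have hsplit : (∑ p ∈ ((univ : Finset (Fin n)) ×ˢ univ).filter (fun p => p.1 = p.2), f p)
      + (∑ p ∈ ((univ : Finset (Fin n)) ×ˢ univ).filter (fun p => ¬ p.1 = p.2), f p)
      = ∑ p ∈ (univ : Finset (Fin n)) ×ˢ univ, f p :=
    Finset.sum_filter_add_sum_filter_not _ _ _
  have htot : (∑ p ∈ (univ : Finset (Fin n)) ×ˢ univ, f p) = (s : ℝ) * t := by
    rw [Finset.sum_product]
    simp only [hf]
    rw [show (∑ a : Fin n, ∑ b : Fin n,
        (if (a : ℕ) + 1 ≤ s then (1:ℝ) else 0) * (if (b : ℕ) + 1 ≤ t then (1:ℝ) else 0))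
        = (∑ a : Fin n, (if (a : ℕ) + 1 ≤ s then (1:ℝ) else 0))
          * (∑ b : Fin n, (if (b : ℕ) + 1 ≤ t then (1:ℝ) else 0)) from
      (Finset.sum_mul_sum _ _ _ _).symm]
    rw [card_chi hs, card_chi ht]
  have hdiag : (∑ p ∈ ((univ : Finset (Fin n)) ×ˢ univ).filter (fun p => p.1 = p.2), f p)
      = (s : ℝ) := by
    rw [show ((univ : Finset (Fin n)) ×ˢ univ).filter (fun p => p.1 = p.2)
        = (univ : Finset (Fin n)).diag from by ext p; simp [Finset.mem_diag]]
    have himg : (univ : Finset (Fin n)).diag = univ.image (fun a => (a, a)) := by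
      ext p
      simp only [Finset.mem_diag, mem_univ, true_and, Finset.mem_image]
      constructor
      · intro h; exact ⟨p.1, by rw [Prod.ext_iff]; exact ⟨rfl, h⟩⟩
      · rintro ⟨a, rfl⟩; rfl
    have hinj : ∀ x ∈ (univ : Finset (Fin n)), ∀ y ∈ (univ : Finset (Fin n)),
        (fun a => (a, a)) x = (fun a => (a, a)) y → x = y := by
      intro x _ y _ h
      exact (Prod.ext_iff.mp h).1
    rw [himg, Finset.sum_image hinj]
    simpa [hf] using sum_chi_mul_chi hst hs
  have hoff : (∑ p ∈ (univ : Finset (Fin n)).offDiag, f p)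
      = (∑ p ∈ ((univ : Finset (Fin n)) ×ˢ univ).filter (fun p => ¬ p.1 = p.2), f p) := by
    congr 1
    ext p; simp [Finset.mem_offDiag]
  rw [hoff]
  linarith [hsplit, htot, hdiag]

lemma Cov_Rdiff {n : ℕ} (hn : 2 ≤ n) (G : SimpleGraph (Fin n)) {s t : ℕ} (hst : s ≤ t)
    (ht : t ≤ n) :
    Cov (fun π => Rdiff G s π) (fun π => Rdiff G t π)
      = (s : ℝ) * ((n : ℝ) - t)
          * ((n : ℝ) * (∑ w : Fin n, ((G.degree w : ℝ))^2) - (∑ w : Fin n, (G.degree w : ℝ))^2)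
        / ((n : ℝ)^2 * ((n : ℝ) - 1)) := by
  have hn0 : 0 < n := by omega
  have hs : s ≤ n := le_trans hst ht
  set d : Fin n → ℝ := fun w => (G.degree w : ℝ) with hd
  set χ : ℕ → Fin n → ℝ := fun r a => if (a : ℕ) + 1 ≤ r then (1:ℝ) else 0 with hχ
  set W : ℕ → Equiv.Perm (Fin n) → ℝ := fun r π => ∑ w : Fin n, d w * χ r (π w) with hW
  have hRW : ∀ r : ℕ, (fun π : Equiv.Perm (Fin n) => Rdiff G r π)
      = fun π => W r π - (G.edgeFinset.card : ℝ) := by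
    intro r
    funext π
    rw [Rdiff_eq]
    rfl
  rw [hRW s, hRW t, Cov_sub_const, Cov_eq]
  -- expectations of W r
  have hEx : ∀ r : ℕ, r ≤ n → Ex (W r) = (∑ w : Fin n, d w) * r / n := by
    intro r hr
    rw [hW]
    rw [Ex_sum']
    have hterm : ∀ w : Fin n, Ex (fun π : Equiv.Perm (Fin n) => d w * χ r (π w))
        = d w * (r / n) := by
      intro w
      have h1 : Ex (fun π : Equiv.Perm (Fin n) => d w * χ r (π w))
          = (∑ a : Fin n, d w * χ r a) / n := Ex_single hn0 w (fun a => d w * χ r a)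
      rw [h1, ← Finset.mul_sum]
      rw [show (∑ a : Fin n, χ r a) = (r : ℝ) from card_chi hr]
      ring
    rw [Finset.sum_congr rfl (fun w _ => hterm w), ← Finset.sum_mul]
    ring
  -- expectation of the product
  have hExWW : Ex (fun π => W s π * W t π)
      = ((s : ℝ) / n) * (∑ w : Fin n, (d w)^2)
        + (((s : ℝ) * t - s) / ((n : ℝ) * ((n : ℝ) - 1)))
            * ((∑ w : Fin n, d w)^2 - (∑ w : Fin n, (d w)^2)) := by
    have hprod : (fun π : Equiv.Perm (Fin n) => W s π * W t π)
        = fun π => ∑ v : Fin n, ∑ w : Fin n, (d v * χ s (π v)) * (d w * χ t (π w)) := by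
      funext π
      rw [hW, Finset.sum_mul_sum]
    rw [hprod]
    rw [Ex_sum']
    have hinner : ∀ v : Fin n,
        Ex (fun π : Equiv.Perm (Fin n) => ∑ w : Fin n, (d v * χ s (π v)) * (d w * χ t (π w)))
        = ∑ w : Fin n, Ex (fun π : Equiv.Perm (Fin n) => (d v * χ s (π v)) * (d w * χ t (π w))) :=
      fun v => Ex_sum' _ _
    rw [Finset.sum_congr rfl (fun v _ => hinner v)]
    have hdiagE : ∀ v : Fin n,
        Ex (fun π : Equiv.Perm (Fin n) => (d v * χ s (π v)) * (d v * χ t (π v)))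
        = (d v)^2 * ((s : ℝ) / n) := by
      intro v
      have h1 : Ex (fun π : Equiv.Perm (Fin n) => (d v * χ s (π v)) * (d v * χ t (π v)))
          = (∑ a : Fin n, (d v * χ s a) * (d v * χ t a)) / n :=
        Ex_single hn0 v (fun a => (d v * χ s a) * (d v * χ t a))
      rw [h1]
      have h2 : (∑ a : Fin n, (d v * χ s a) * (d v * χ t a))
          = (d v)^2 * (∑ a : Fin n, χ s a * χ t a) := by
        rw [Finset.mul_sum]
        exact Finset.sum_congr rfl (fun a _ => by ring)
      rw [h2, show (∑ a : Fin n, χ s a * χ t a) = (s : ℝ) from sum_chi_mul_chi hst hs]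
      ring
    have hoffE : ∀ v w : Fin n, v ≠ w →
        Ex (fun π : Equiv.Perm (Fin n) => (d v * χ s (π v)) * (d w * χ t (π w)))
        = d v * d w * (((s : ℝ) * t - s) / ((n : ℝ) * ((n : ℝ) - 1))) := by
      intro v w hvw
      have h1 : Ex (fun π : Equiv.Perm (Fin n) => (d v * χ s (π v)) * (d w * χ t (π w)))
          = (∑ p ∈ (univ : Finset (Fin n)).offDiag, (d v * χ s p.1) * (d w * χ t p.2))
              / ((n : ℝ) * ((n : ℝ) - 1)) :=
        Ex_pair hn hvw (fun a b => (d v * χ s a) * (d w * χ t b))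
      rw [h1]
      have h2 : (∑ p ∈ (univ : Finset (Fin n)).offDiag, (d v * χ s p.1) * (d w * χ t p.2))
          = d v * d w * (∑ p ∈ (univ : Finset (Fin n)).offDiag, χ s p.1 * χ t p.2) := by
        rw [Finset.mul_sum]
        exact Finset.sum_congr rfl (fun p _ => by ring)
      rw [h2, show (∑ p ∈ (univ : Finset (Fin n)).offDiag, χ s p.1 * χ t p.2)
          = (s : ℝ) * t - s from sum_offDiag_chi hst ht]
      ring
    -- split each inner sum at w = v
    have hsplit : ∀ v : Fin n,
        (∑ w : Fin n, Ex (fun π : Equiv.Perm (Fin n) => (d v * χ s (π v)) * (d w * χ t (π w))))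
        = (d v)^2 * ((s : ℝ) / n)
          + d v * ((∑ w : Fin n, d w) - d v) * (((s : ℝ) * t - s) / ((n : ℝ) * ((n : ℝ) - 1))) := by
      intro v
      rw [← Finset.add_sum_erase _ _ (mem_univ v), hdiagE v]
      congr 1
      have : ∀ w ∈ univ.erase v,
          Ex (fun π : Equiv.Perm (Fin n) => (d v * χ s (π v)) * (d w * χ t (π w)))
          = d v * (((s : ℝ) * t - s) / ((n : ℝ) * ((n : ℝ) - 1))) * d w := by
        intro w hw
        rw [hoffE v w (Finset.ne_of_mem_erase hw).symm]
        ring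
      rw [Finset.sum_congr rfl this, ← Finset.mul_sum,
        Finset.sum_erase_eq_sub (mem_univ v)]
      ring
    rw [Finset.sum_congr rfl (fun v _ => hsplit v), Finset.sum_add_distrib]
    have e1 : (∑ v : Fin n, (d v)^2 * ((s : ℝ)/n)) = ((s : ℝ)/n) * (∑ w : Fin n, (d w)^2) := by
      rw [Finset.mul_sum]
      exact Finset.sum_congr rfl fun i _ => mul_comm _ _
    have key : (∑ v : Fin n, d v * ((∑ w : Fin n, d w) - d v))
        = (∑ w : Fin n, d w)^2 - (∑ w : Fin n, (d w)^2) := by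
      have h1 : (∑ v : Fin n, d v * ((∑ w : Fin n, d w) - d v))
          = ∑ v : Fin n, (d v * (∑ w : Fin n, d w) - (d v)^2) :=
        Finset.sum_congr rfl fun v _ => by ring
      rw [h1, Finset.sum_sub_distrib, ← Finset.sum_mul, sq]
    have e2 : (∑ v : Fin n, d v * ((∑ w : Fin n, d w) - d v)
          * (((s : ℝ) * t - s) / ((n : ℝ) * ((n : ℝ) - 1))))
        = (((s : ℝ) * t - s) / ((n : ℝ) * ((n : ℝ) - 1)))
            * ((∑ w : Fin n, d w)^2 - (∑ w : Fin n, (d w)^2)) := by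
      rw [← Finset.sum_mul, key, mul_comm]
    rw [e1, e2]
  rw [hExWW, hEx s hs, hEx t ht]
  have hne : (n : ℝ) ≠ 0 := Nat.cast_ne_zero.mpr hn0.ne'
  have hne1 : (n : ℝ) - 1 ≠ 0 := by
    have : (2 : ℝ) ≤ (n : ℝ) := by exact_mod_cast hn
    linarith
  field_simp
  ring

lemma Var_eq_Cov {n : ℕ} (f : Equiv.Perm (Fin n) → ℝ) : Var f = Cov f f := by
  unfold Var Cov
  congr 1
  funext π
  rw [sq]

lemma Var_Rdiff {n : ℕ} (hn : 2 ≤ n) (G : SimpleGraph (Fin n)) {t : ℕ} (ht : t ≤ n) :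
    Var (fun π => Rdiff G t π)
      = (t : ℝ) * ((n : ℝ) - t)
          * ((n : ℝ) * (∑ w : Fin n, ((G.degree w : ℝ))^2) - (∑ w : Fin n, (G.degree w : ℝ))^2)
        / ((n : ℝ)^2 * ((n : ℝ) - 1)) := by
  rw [show Var (fun π => Rdiff G t π) = Cov (fun π => Rdiff G t π) (fun π => Rdiff G t π) from
    Var_eq_Cov _]
  exact Cov_Rdiff hn G le_rfl ht

lemma Cov_Zdiff_eq {n : ℕ} (hn : 2 ≤ n) (G : SimpleGraph (Fin n)) {s t : ℕ}
    (hs0 : 0 < s) (hst : s ≤ t) (ht : t < n)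
    (hK : 0 < (n : ℝ) * (∑ w : Fin n, ((G.degree w : ℝ))^2) - (∑ w : Fin n, (G.degree w : ℝ))^2) :
    Cov (fun π => Zdiff G s π) (fun π => Zdiff G t π)
      = Real.sqrt ((s : ℝ) * ((n : ℝ) - t)) / Real.sqrt ((t : ℝ) * ((n : ℝ) - s)) := by
  have hZ : Cov (fun π => Zdiff G s π) (fun π => Zdiff G t π)
      = Cov (fun π => Rdiff G s π) (fun π => Rdiff G t π)
          / (Real.sqrt (Var (fun σ => Rdiff G s σ)) * Real.sqrt (Var (fun σ => Rdiff G t σ))) := by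
    rw [show (fun π => Zdiff G s π) = fun π =>
        ((fun σ => Rdiff G s σ) π - Ex (fun σ => Rdiff G s σ))
          / Real.sqrt (Var (fun σ => Rdiff G s σ)) from rfl,
      show (fun π => Zdiff G t π) = fun π =>
        ((fun σ => Rdiff G t σ) π - Ex (fun σ => Rdiff G t σ))
          / Real.sqrt (Var (fun σ => Rdiff G t σ)) from rfl]
    exact Cov_affine _ _ _ _ _ _
  set K := (n : ℝ) * (∑ w : Fin n, ((G.degree w : ℝ))^2) - (∑ w : Fin n, (G.degree w : ℝ))^2
    with hKdef
  set c : ℝ := K / ((n : ℝ)^2 * ((n : ℝ) - 1)) with hc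
  have hn2 : (2 : ℝ) ≤ (n : ℝ) := by exact_mod_cast hn
  have hcpos : 0 < c := by
    apply div_pos hK
    nlinarith
  have hspos : (0 : ℝ) < s := by exact_mod_cast hs0
  have htpos : (0 : ℝ) < t := lt_of_lt_of_le hspos (by exact_mod_cast hst)
  have hnt : (0 : ℝ) < (n : ℝ) - t := by
    have : (t : ℝ) < n := by exact_mod_cast ht
    linarith
  have hns : (0 : ℝ) < (n : ℝ) - s := by
    have : (s : ℝ) ≤ t := by exact_mod_cast hst
    linarith
  rw [hZ, Cov_Rdiff hn G hst (le_of_lt ht), Var_Rdiff hn G (le_trans hst (le_of_lt ht)),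
    Var_Rdiff hn G (le_of_lt ht)]
  rw [show (s : ℝ) * ((n : ℝ) - t) * K / ((n : ℝ)^2 * ((n : ℝ) - 1))
      = (s : ℝ) * ((n : ℝ) - t) * c from by rw [hc]; ring,
    show (s : ℝ) * ((n : ℝ) - s) * K / ((n : ℝ)^2 * ((n : ℝ) - 1))
      = (s : ℝ) * ((n : ℝ) - s) * c from by rw [hc]; ring,
    show (t : ℝ) * ((n : ℝ) - t) * K / ((n : ℝ)^2 * ((n : ℝ) - 1))
      = (t : ℝ) * ((n : ℝ) - t) * c from by rw [hc]; ring]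
  set L := (s : ℝ) * ((n : ℝ) - t) * c / (Real.sqrt ((s : ℝ) * ((n : ℝ) - s) * c)
      * Real.sqrt ((t : ℝ) * ((n : ℝ) - t) * c)) with hL
  set R := Real.sqrt ((s : ℝ) * ((n : ℝ) - t)) / Real.sqrt ((t : ℝ) * ((n : ℝ) - s)) with hR
  have hLpos : 0 < L := by
    rw [hL]
    positivity
  have hRpos : 0 ≤ R := by
    rw [hR]
    positivity
  have hsq : L ^ 2 = R ^ 2 := by
    rw [hL, hR]
    simp only [div_pow, mul_pow]
    rw [
      Real.sq_sqrt (by positivity : (0:ℝ) ≤ (s : ℝ) * ((n : ℝ) - s) * c),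
      Real.sq_sqrt (by positivity : (0:ℝ) ≤ (t : ℝ) * ((n : ℝ) - t) * c),
      Real.sq_sqrt (by positivity : (0:ℝ) ≤ (s : ℝ) * ((n : ℝ) - t)),
      Real.sq_sqrt (by positivity : (0:ℝ) ≤ (t : ℝ) * ((n : ℝ) - s))]
    field_simp
  calc L = Real.sqrt (L ^ 2) := (Real.sqrt_sq hLpos.le).symm
    _ = Real.sqrt (R ^ 2) := by rw [hsq]
    _ = R := Real.sqrt_sq hRpos


theorem limiting_covariance_Zdiff (u v : ℝ) (hu : 0 < u) (huv : u ≤ v) (hv : v < 1)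
    (G : ∀ n : ℕ, SimpleGraph (Fin n))
    (hVar : ∀ᶠ n : ℕ in Filter.atTop,
        0 < Var (fun π => Rdiff (G n) ⌊(n : ℝ) * u⌋₊ π) ∧
        0 < Var (fun π => Rdiff (G n) ⌊(n : ℝ) * v⌋₊ π)) :
    Filter.Tendsto
      (fun n : ℕ =>
        Cov (fun π => Zdiff (G n) ⌊(n : ℝ) * u⌋₊ π) (fun π => Zdiff (G n) ⌊(n : ℝ) * v⌋₊ π))
      Filter.atTop
      (nhds (Real.sqrt (u * (1 - v)) / Real.sqrt (v * (1 - u)))) := by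
  have hv0 : 0 < v := lt_of_lt_of_le hu huv
  have hu1 : u < 1 := lt_of_le_of_lt huv hv
  -- the limit functions
  set a : ℕ → ℝ := fun n => (⌊(n : ℝ) * u⌋₊ : ℝ) / n with ha_def
  set b : ℕ → ℝ := fun n => (⌊(n : ℝ) * v⌋₊ : ℝ) / n with hb_def
  have ha : Filter.Tendsto a Filter.atTop (nhds u) := by
    have h1 : Filter.Tendsto (fun x : ℝ => (⌊u * x⌋₊ : ℝ) / x) Filter.atTop (nhds u) :=
      tendsto_nat_floor_mul_div_atTop hu.le
    have h2 := h1.comp (tendsto_natCast_atTop_atTop (R := ℝ))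
    refine h2.congr (fun n => ?_)
    simp only [Function.comp, ha_def, mul_comm]
  have hb : Filter.Tendsto b Filter.atTop (nhds v) := by
    have h1 : Filter.Tendsto (fun x : ℝ => (⌊v * x⌋₊ : ℝ) / x) Filter.atTop (nhds v) :=
      tendsto_nat_floor_mul_div_atTop hv0.le
    have h2 := h1.comp (tendsto_natCast_atTop_atTop (R := ℝ))
    refine h2.congr (fun n => ?_)
    simp only [Function.comp, hb_def, mul_comm]
  have hF : Filter.Tendsto (fun n => Real.sqrt (a n * (1 - b n)) / Real.sqrt (b n * (1 - a n)))
      Filter.atTop (nhds (Real.sqrt (u * (1 - v)) / Real.sqrt (v * (1 - u)))) := by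
    have hnum : Filter.Tendsto (fun n => Real.sqrt (a n * (1 - b n))) Filter.atTop
        (nhds (Real.sqrt (u * (1 - v)))) :=
      (Real.continuous_sqrt.tendsto _).comp (ha.mul (tendsto_const_nhds.sub hb))
    have hden : Filter.Tendsto (fun n => Real.sqrt (b n * (1 - a n))) Filter.atTop
        (nhds (Real.sqrt (v * (1 - u)))) :=
      (Real.continuous_sqrt.tendsto _).comp (hb.mul (tendsto_const_nhds.sub ha))
    have hne : Real.sqrt (v * (1 - u)) ≠ 0 := by
      have : 0 < v * (1 - u) := mul_pos hv0 (by linarith)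
      positivity
    exact hnum.div hden hne
  refine Filter.Tendsto.congr' ?_ hF
  -- eventual equality
  have hev : ∀ᶠ n : ℕ in Filter.atTop,
      (2 ≤ n ∧ (0 < Var (fun π => Rdiff (G n) ⌊(n : ℝ) * u⌋₊ π) ∧
        0 < Var (fun π => Rdiff (G n) ⌊(n : ℝ) * v⌋₊ π))) :=
    (Filter.eventually_ge_atTop 2).and hVar
  filter_upwards [hev] with n hn
  obtain ⟨hn2, hVs, hVt⟩ := hn
  set s := ⌊(n : ℝ) * u⌋₊ with hs_def
  set t := ⌊(n : ℝ) * v⌋₊ with ht_def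
  have hnpos : (0 : ℝ) < n := by
    have : (2 : ℝ) ≤ n := by exact_mod_cast hn2
    linarith
  have hsn : s < n := by
    rw [hs_def]
    rw [Nat.floor_lt (by positivity)]
    calc (n : ℝ) * u < (n : ℝ) * 1 := by
          exact mul_lt_mul_of_pos_left hu1 hnpos
      _ = n := mul_one _
  have htn : t < n := by
    rw [ht_def, Nat.floor_lt (by positivity)]
    calc (n : ℝ) * v < (n : ℝ) * 1 := mul_lt_mul_of_pos_left hv hnpos
      _ = n := mul_one _
  have hst : s ≤ t := Nat.floor_le_floor (mul_le_mul_of_nonneg_left huv hnpos.le)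
  -- positivity of K and s
  set K := (n : ℝ) * (∑ w : Fin n, ((G n).degree w : ℝ)^2) - (∑ w : Fin n, ((G n).degree w : ℝ))^2
    with hK_def
  have hVs' := hVs
  rw [Var_Rdiff hn2 (G n) hsn.le] at hVs'
  have hdenpos : (0 : ℝ) < (n : ℝ)^2 * ((n : ℝ) - 1) := by
    have : (2 : ℝ) ≤ n := by exact_mod_cast hn2
    nlinarith
  have hnum : 0 < (s : ℝ) * ((n : ℝ) - s) * K := by
    have := (div_pos_iff.mp hVs')
    rcases this with ⟨h1, _⟩ | ⟨_, h2⟩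
    · exact h1
    · exact absurd hdenpos (by linarith)
  have hns : (0 : ℝ) < (n : ℝ) - s := by
    have : (s : ℝ) < n := by exact_mod_cast hsn
    linarith
  have hs0 : 0 < s := by
    by_contra h
    push_neg at h
    interval_cases s
    simp at hnum
  have hKpos : 0 < K := by
    have hsr : (0 : ℝ) < s := by exact_mod_cast hs0
    by_contra h
    push_neg at h
    nlinarith [mul_pos hsr hns, mul_nonpos_of_nonneg_of_nonpos (mul_pos hsr hns).le h]
  -- apply the fixed-n covariance formula
  rw [Cov_Zdiff_eq hn2 (G n) hs0 hst htn hKpos]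
  -- convert to normalized form
  have hts : (0 : ℝ) < t := by
    have : (0 : ℝ) < s := by exact_mod_cast hs0
    have h2 : (s : ℝ) ≤ t := by exact_mod_cast hst
    linarith
  have hnt : (0 : ℝ) < (n : ℝ) - t := by
    have : (t : ℝ) < n := by exact_mod_cast htn
    linarith
  have e1 : a n * (1 - b n) = (s : ℝ) * ((n : ℝ) - t) / (n : ℝ)^2 := by
    rw [ha_def, hb_def]
    field_simp
    ring
  have e2 : b n * (1 - a n) = (t : ℝ) * ((n : ℝ) - s) / (n : ℝ)^2 := by
    rw [ha_def, hb_def]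
    field_simp
    ring
  rw [e1, e2, Real.sqrt_div (by positivity), Real.sqrt_div (by positivity),
    Real.sqrt_sq hnpos.le]
  have hB : Real.sqrt ((t : ℝ) * ((n : ℝ) - s)) ≠ 0 := by positivity
  field_simp
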